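/- Let Ω ⊆ ℂ × ℂ be open and let y : Ω → ℂ be holomorphic in both variables (z, t) and nowhere zero. Define u := −(∂²y/∂z²)/y and g := 1/y² on Ω, and assume ∂y/∂t = (∂u/∂z)·y − 2·u·(∂y/∂z) on Ω. Then on Ω: ∂g/∂t = −2·∂/∂z( g·u ), and moreover ∂g/∂t = −∂³g/∂z³ + 3·(∂g/∂z)·(∂²g/∂z²)/g − (3/2)·(∂g/∂z)³/g². (This is the computation in Section 7.3 of the paper showing that the KdV-evolved family g_t satisfies, up to a multiplicative constant, the Shiffman evolution equation of Theorem 6.10(iii).) -/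

import Mathlib

open Complex

/-- Partial derivative in the first (space, `z`) variable of a function on `ℂ × ℂ`. -/
noncomputable def dz (f : ℂ × ℂ → ℂ) (p : ℂ × ℂ) : ℂ := fderiv ℂ f p (1, 0)

/-- Partial derivative in the second (time, `t`) variable of a function on `ℂ × ℂ`. -/
noncomputable def dt (f : ℂ × ℂ → ℂ) (p : ℂ × ℂ) : ℂ := fderiv ℂ f p (0, 1)

/-- The Schrödinger potential `u = −(∂²y/∂z²)/y` of a nowhere-zero function `y(z,t)`. -/
noncomputable def schrodingerPotential (y : ℂ × ℂ → ℂ) : ℂ × ℂ → ℂ := fun p =>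
  -(dz (dz y) p) / y p

/-- The "Gauss map" `g = 1/y²` associated to `y(z,t)`. -/
noncomputable def gaussOf (y : ℂ × ℂ → ℂ) : ℂ × ℂ → ℂ := fun p => 1 / (y p) ^ 2

section helpers

variable {f g : ℂ × ℂ → ℂ} {p v : ℂ × ℂ}

lemma AnalyticOnNhd.dz' {s : Set (ℂ × ℂ)} (h : AnalyticOnNhd ℂ f s) :
    AnalyticOnNhd ℂ (dz f) s :=
  (ContinuousLinearMap.apply ℂ ℂ ((1, 0) : ℂ × ℂ)).comp_analyticOnNhd h.fderiv

lemma pd_comp {φ : ℂ → ℂ} {c : ℂ} (hφ : HasDerivAt φ c (f p)) (hf : DifferentiableAt ℂ f p) :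
    fderiv ℂ (fun q => φ (f q)) p v = c * fderiv ℂ f p v := by
  rw [show (fun q => φ (f q)) = φ ∘ f from rfl, (hφ.comp_hasFDerivAt p hf.hasFDerivAt).fderiv]
  simp

lemma diff_comp {φ : ℂ → ℂ} {c : ℂ} (hφ : HasDerivAt φ c (f p)) (hf : DifferentiableAt ℂ f p) :
    DifferentiableAt ℂ (fun q => φ (f q)) p :=
  (hφ.comp_hasFDerivAt p hf.hasFDerivAt).differentiableAt

lemma pd_mul (hf : DifferentiableAt ℂ f p) (hg : DifferentiableAt ℂ g p) :
    fderiv ℂ (fun q => f q * g q) p v = fderiv ℂ f p v * g p + f p * fderiv ℂ g p v := by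
  rw [fderiv_fun_mul hf hg]; simp; ring

lemma pd_add (hf : DifferentiableAt ℂ f p) (hg : DifferentiableAt ℂ g p) :
    fderiv ℂ (fun q => f q + g q) p v = fderiv ℂ f p v + fderiv ℂ g p v := by
  rw [fderiv_fun_add hf hg]; simp

lemma pd_const_mul (hf : DifferentiableAt ℂ f p) (c : ℂ) :
    fderiv ℂ (fun q => c * f q) p v = c * fderiv ℂ f p v := by
  rw [fderiv_const_mul hf c]; simp

lemma hasDerivAt_one_div_pow (n : ℕ) {a : ℂ} (ha : a ≠ 0) :
    HasDerivAt (fun w : ℂ => (w ^ n)⁻¹) (-(n : ℂ) / a ^ (n + 1)) a := by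
  have h : HasDerivAt (fun w : ℂ => (w ^ n)⁻¹) (-(↑n * a ^ (n - 1)) / (a ^ n) ^ 2) a :=
    (hasDerivAt_pow n a).inv (pow_ne_zero n ha)
  convert h using 1
  rcases n with _ | m
  · simp
  · have h1 : (m + 1 : ℕ) - 1 = m := rfl
    rw [h1]
    field_simp
    ring

lemma pd_inv_pow (n : ℕ) (hf : DifferentiableAt ℂ f p) (h0 : f p ≠ 0) :
    fderiv ℂ (fun q => (f q ^ n)⁻¹) p v = -(n : ℂ) / (f p) ^ (n + 1) * fderiv ℂ f p v :=
  pd_comp (φ := fun w => (w ^ n)⁻¹) (f := f) (hasDerivAt_one_div_pow n h0) hf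

lemma diff_inv_pow (n : ℕ) (hf : DifferentiableAt ℂ f p) (h0 : f p ≠ 0) :
    DifferentiableAt ℂ (fun q => (f q ^ n)⁻¹) p :=
  diff_comp (φ := fun w => (w ^ n)⁻¹) (f := f) (hasDerivAt_one_div_pow n h0) hf

lemma shiffA (a b c d : ℂ) (ha : a ≠ 0) :
    -2 * (((-d / a + c * b / a ^ 2) * a - 2 * (-c / a) * b) / a ^ 3)
      = 2 * (d * a - 3 * b * c) / a ^ 4 := by
  have hn : ∀ n : ℕ, a ^ n * a⁻¹ ^ n = 1 := fun n => by
    rw [← mul_pow, mul_inv_cancel₀ ha, one_pow]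
  field_simp
  linear_combination

lemma shiffB (a b c d : ℂ) (ha : a ≠ 0) :
    -2 * (-2 * b / a ^ 3 * (-c / a) + 1 / a ^ 2 * (-d / a + c * b / a ^ 2))
      = 2 * (d * a - 3 * b * c) / a ^ 4 := by
  have hn : ∀ n : ℕ, a ^ n * a⁻¹ ^ n = 1 := fun n => by
    rw [← mul_pow, mul_inv_cancel₀ ha, one_pow]
  field_simp
  linear_combination

lemma shiffC (a b c d : ℂ) (ha : a ≠ 0) :
    -(-2 * d / a ^ 3 + 18 * (b * c) / a ^ 4 - 24 * (b * b * b) / a ^ 5)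
        + 3 * (-2 * b / a ^ 3) * (-2 * c / a ^ 3 + 6 * (b * b) / a ^ 4) / (1 / a ^ 2)
        - 3 / 2 * (-2 * b / a ^ 3) ^ 3 / (1 / a ^ 2) ^ 2
      = 2 * (d * a - 3 * b * c) / a ^ 4 := by
  have hn : ∀ n : ℕ, a ^ n * a⁻¹ ^ n = 1 := fun n => by
    rw [← mul_pow, mul_inv_cancel₀ ha, one_pow]
  field_simp
  linear_combination

end helpers

theorem kdv_evolution_gives_shiffman_evolution_of_gauss_map
    (Ω : Set (ℂ × ℂ)) (hΩ : IsOpen Ω) (y : ℂ × ℂ → ℂ)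
    (hy : AnalyticOnNhd ℂ y Ω) (hy0 : ∀ p ∈ Ω, y p ≠ 0)
    (hJ : ∀ p ∈ Ω,
      dt y p = dz (schrodingerPotential y) p * y p
        - 2 * schrodingerPotential y p * dz y p) :
    ∀ p ∈ Ω,
      dt (gaussOf y) p
          = -2 * dz (fun q => gaussOf y q * schrodingerPotential y q) p ∧
      dt (gaussOf y) p
          = -(dz (dz (dz (gaussOf y))) p)
            + 3 * dz (gaussOf y) p * dz (dz (gaussOf y)) p / gaussOf y p
            - (3 / 2) * (dz (gaussOf y) p) ^ 3 / (gaussOf y p) ^ 2 := by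
  intro p hp
  set y1 := dz y with hy1def
  set y2 := dz y1 with hy2def
  set y3 := dz y2 with hy3def
  have hA1 : AnalyticOnNhd ℂ y1 Ω := hy.dz'
  have hA2 : AnalyticOnNhd ℂ y2 Ω := hA1.dz'
  have hd0 : ∀ q ∈ Ω, DifferentiableAt ℂ y q := fun q hq => (hy q hq).differentiableAt
  have hd1 : ∀ q ∈ Ω, DifferentiableAt ℂ y1 q := fun q hq => (hA1 q hq).differentiableAt
  have hd2 : ∀ q ∈ Ω, DifferentiableAt ℂ y2 q := fun q hq => (hA2 q hq).differentiableAt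
  have hb1 : ∀ q, (fderiv ℂ y q) ((1 : ℂ), (0 : ℂ)) = y1 q := fun q => rfl
  have hb2 : ∀ q, (fderiv ℂ y1 q) ((1 : ℂ), (0 : ℂ)) = y2 q := fun q => rfl
  have hb3 : ∀ q, (fderiv ℂ y2 q) ((1 : ℂ), (0 : ℂ)) = y3 q := fun q => rfl
  have hgdef : gaussOf y = fun q => (y q ^ 2)⁻¹ := by
    funext q; simp [gaussOf, one_div]
  -- first z-derivative of g
  have E1 : ∀ q ∈ Ω, dz (gaussOf y) q = -2 * y1 q / y q ^ 3 := by
    intro q hq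
    rw [hgdef]
    show fderiv ℂ (fun r => (y r ^ 2)⁻¹) q (1, 0) = _
    rw [pd_inv_pow 2 (hd0 q hq) (hy0 q hq), hb1]
    push_cast
    ring
  -- t-derivative of g
  have E1t : dt (gaussOf y) p = -2 * (dt y p / y p ^ 3) := by
    rw [hgdef]
    show fderiv ℂ (fun r => (y r ^ 2)⁻¹) p (0, 1) = _
    rw [pd_inv_pow 2 (hd0 p hp) (hy0 p hp)]
    show -(2 : ℕ) / y p ^ (2 + 1) * dt y p = _
    push_cast
    ring
  have dz_congr : ∀ (f g : ℂ × ℂ → ℂ), Set.EqOn f g Ω → ∀ q ∈ Ω, dz f q = dz g q := by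
    intro f g h q hq
    unfold dz
    rw [Filter.EventuallyEq.fderiv_eq (h.eventuallyEq_of_mem (hΩ.mem_nhds hq))]
  have hF1 : (fun r => -2 * y1 r / y r ^ 3) = (fun r => (-2 * y1 r) * (y r ^ 3)⁻¹) := by
    funext r; ring
  -- second z-derivative of g
  have E2 : ∀ q ∈ Ω, dz (dz (gaussOf y)) q
      = -2 * y2 q / y q ^ 3 + 6 * (y1 q * y1 q) / y q ^ 4 := by
    intro q hq
    rw [dz_congr _ (fun r => -2 * y1 r / y r ^ 3) (fun r hr => E1 r hr) q hq, hF1]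
    show fderiv ℂ (fun r => (-2 * y1 r) * (y r ^ 3)⁻¹) q (1, 0) = _
    rw [pd_mul ((hd1 q hq).const_mul _) (diff_inv_pow 3 (hd0 q hq) (hy0 q hq)),
      pd_const_mul (hd1 q hq), pd_inv_pow 3 (hd0 q hq) (hy0 q hq), hb1, hb2]
    push_cast
    ring
  have h0 := hy0 p hp
  have hF2 : (fun r => -2 * y2 r / y r ^ 3 + 6 * (y1 r * y1 r) / y r ^ 4)
      = (fun r => (-2 * y2 r) * (y r ^ 3)⁻¹ + (6 * (y1 r * y1 r)) * (y r ^ 4)⁻¹) := by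
    funext r; ring
  -- third z-derivative of g at p
  have E3 : dz (dz (dz (gaussOf y))) p
      = -2 * y3 p / y p ^ 3 + 18 * (y1 p * y2 p) / y p ^ 4
        - 24 * (y1 p * y1 p * y1 p) / y p ^ 5 := by
    rw [dz_congr _ (fun r => -2 * y2 r / y r ^ 3 + 6 * (y1 r * y1 r) / y r ^ 4)
      (fun r hr => E2 r hr) p hp, hF2]
    show fderiv ℂ (fun r => (-2 * y2 r) * (y r ^ 3)⁻¹ + (6 * (y1 r * y1 r)) * (y r ^ 4)⁻¹)
      p (1, 0) = _
    have d3 := diff_inv_pow 3 (hd0 p hp) h0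
    have d4 := diff_inv_pow 4 (hd0 p hp) h0
    rw [pd_add (((hd2 p hp).const_mul _).fun_mul d3)
        ((((hd1 p hp).fun_mul (hd1 p hp)).const_mul _).fun_mul d4),
      pd_mul ((hd2 p hp).const_mul _) d3,
      pd_mul (((hd1 p hp).fun_mul (hd1 p hp)).const_mul _) d4,
      pd_const_mul (hd2 p hp), pd_const_mul ((hd1 p hp).fun_mul (hd1 p hp)),
      pd_mul (hd1 p hp) (hd1 p hp),
      pd_inv_pow 3 (hd0 p hp) h0, pd_inv_pow 4 (hd0 p hp) h0, hb1, hb2, hb3]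
    push_cast
    ring
  -- the potential and its z-derivative
  have hudef : schrodingerPotential y = fun q => -(y2 q) * (y q ^ 1)⁻¹ := by
    funext q; simp [schrodingerPotential, div_eq_mul_inv, hy2def, hy1def]
  have hdu : ∀ q ∈ Ω, DifferentiableAt ℂ (schrodingerPotential y) q := by
    intro q hq
    rw [hudef]
    exact ((hd2 q hq).neg).mul (diff_inv_pow 1 (hd0 q hq) (hy0 q hq))
  have E4 : dz (schrodingerPotential y) p = -y3 p / y p + y2 p * y1 p / y p ^ 2 := by
    rw [hudef]
    show fderiv ℂ (fun q => -(y2 q) * (y q ^ 1)⁻¹) p (1, 0) = _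
    rw [pd_mul ((hd2 p hp).fun_neg) (diff_inv_pow 1 (hd0 p hp) h0),
      pd_inv_pow 1 (hd0 p hp) h0, hb1]
    have hneg : fderiv ℂ (fun q => -(y2 q)) p ((1 : ℂ), (0 : ℂ)) = -(y3 p) := by
      rw [fderiv_fun_neg]; simp [hy3def, dz]
    rw [hneg]
    push_cast
    field_simp
  have hdg : DifferentiableAt ℂ (gaussOf y) p := by
    rw [hgdef]; exact diff_inv_pow 2 (hd0 p hp) h0
  have E5 : dz (fun q => gaussOf y q * schrodingerPotential y q) p
      = dz (gaussOf y) p * schrodingerPotential y p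
        + gaussOf y p * dz (schrodingerPotential y) p := by
    show fderiv ℂ (fun q => gaussOf y q * schrodingerPotential y q) p (1, 0) = _
    rw [pd_mul hdg (hdu p hp)]
    rfl
  have hJp := hJ p hp
  have hup : schrodingerPotential y p = -y2 p / y p := rfl
  have hgp : gaussOf y p = 1 / y p ^ 2 := rfl
  constructor
  · rw [E1t, hJp, E5, E1 p hp, E4, hup, hgp,
      shiffA (y p) (y1 p) (y2 p) (y3 p) h0, shiffB (y p) (y1 p) (y2 p) (y3 p) h0]
  · rw [E1t, hJp, E4, hup, E3, E2 p hp, E1 p hp, hgp,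
      shiffA (y p) (y1 p) (y2 p) (y3 p) h0, shiffC (y p) (y1 p) (y2 p) (y3 p) h0]
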